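/- If a chain of domino tiles is blocked with both ends equal to k, then the total pip sum of the tiles in the chain is at least 6k + 42. -/

import Mathlib

/-- A domino tile is an unordered pair of values in `{0,…,6}`. -/
abbrev Tile := Sym2 (Fin 7)

/-- The pip sum of the tile `[a,b]` is `a + b`. -/
def pips (t : Tile) : ℕ :=
  Sym2.lift ⟨fun (a b : Fin 7) => (a : ℕ) + (b : ℕ), fun a b => Nat.add_comm a b⟩ t

/-- A chain of domino tiles: a nonempty finite sequence of oriented tiles
`(a₁,b₁),…,(aₙ,bₙ)` whose underlying unordered tiles are pairwise distinct and
which satisfies `bᵢ = aᵢ₊₁` for all `1 ≤ i < n`. -/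
structure DChain where
  tiles : List (Fin 7 × Fin 7)
  ne : tiles ≠ []
  nodup : (tiles.map fun p => Sym2.mk p.1 p.2).Nodup
  linked : tiles.Chain' fun p q => p.2 = q.1

/-- The left end `a₁` of a chain. -/
def DChain.left (C : DChain) : Fin 7 := (C.tiles.head C.ne).1

/-- The right end `bₙ` of a chain. -/
def DChain.right (C : DChain) : Fin 7 := (C.tiles.getLast C.ne).2

/-- The `2n` entries `a₁,b₁,a₂,b₂,…,aₙ,bₙ` of a chain. -/
def DChain.entries (C : DChain) : List (Fin 7) := C.tiles.flatMap fun p => [p.1, p.2]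

/-- The underlying (unordered) tiles of a chain. -/
def DChain.tileList (C : DChain) : List Tile := C.tiles.map fun p => Sym2.mk p.1 p.2

/-- The total pip sum of a chain. -/
def DChain.pipsSum (C : DChain) : ℕ := (C.tiles.map fun p => (p.1 : ℕ) + (p.2 : ℕ)).sum

/-- A chain is blocked if no domino tile outside the chain contains its left end,
and no domino tile outside the chain contains its right end. -/
def DChain.Blocked (C : DChain) : Prop :=
  ∀ t : Tile, t ∉ C.tileList → C.left ∉ t ∧ C.right ∉ t

/-- If a chain of domino tiles is blocked with both ends equal to `k`, then the total
pip sum of the tiles in the chain is at least `6k + 42`. -/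
lemma sum_entries_eq (l : List (Fin 7 × Fin 7)) :
    ((l.flatMap fun p => [p.1, p.2]).map Fin.val).sum
      = (l.map fun p => (p.1 : ℕ) + (p.2 : ℕ)).sum := by
  induction l with
  | nil => simp
  | cons p t ih =>
    simp only [List.flatMap_cons, List.map_append, List.sum_append, ih, List.map_cons,
      List.map_nil, List.sum_cons, List.sum_nil]
    omega

lemma count_entries_eq (v : Fin 7) (l : List (Fin 7 × Fin 7)) :
    (l.flatMap fun p => [p.1, p.2]).count v
      = (l.map fun p => (if p.1 = v then 1 else 0) + (if p.2 = v then 1 else 0)).sum := by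
  induction l with
  | nil => simp
  | cons p t ih =>
    simp [List.flatMap_cons, List.count_append, List.count_cons, ih, beq_iff_eq]
    omega

lemma sum_map_val (E : List (Fin 7)) :
    (E.map Fin.val).sum = ∑ v : Fin 7, E.count v * (v : ℕ) := by
  induction E with
  | nil => simp
  | cons a t ih =>
    rw [List.map_cons, List.sum_cons, ih]
    simp only [List.count_cons, beq_iff_eq]
    rw [show (∑ v : Fin 7, (t.count v + if a = v then 1 else 0) * (v : ℕ))
        = ∑ v : Fin 7, (t.count v * (v : ℕ) + if a = v then (v : ℕ) else 0) by
      refine Finset.sum_congr rfl fun v _ => ?_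
      split_ifs <;> ring]
    rw [Finset.sum_add_distrib, Finset.sum_ite_eq]
    simp [add_comm]

lemma parity_aux (v : Fin 7) : ∀ (p : Fin 7 × Fin 7) (l : List (Fin 7 × Fin 7)),
    (p :: l).Chain' (fun p q => p.2 = q.1) →
    (((p :: l).flatMap fun q => [q.1, q.2]).count v
      + (if p.1 = v then 1 else 0)
      + (if ((p :: l).getLast (by simp)).2 = v then 1 else 0)) % 2 = 0 := by
  intro p l
  induction l generalizing p with
  | nil =>
    intro _
    simp only [List.flatMap_cons, List.flatMap_nil, List.append_nil, List.count_cons,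
      List.count_nil, List.getLast_singleton, beq_iff_eq]
    by_cases h1 : p.1 = v <;> by_cases h2 : p.2 = v <;> simp [h1, h2]
  | cons q t ih =>
    intro hc
    have h1 : p.2 = q.1 := (List.isChain_cons_cons.mp hc).1
    have h2 := ih q (List.isChain_cons_cons.mp hc).2
    have hgl : ((p :: q :: t).getLast (by simp)) = ((q :: t).getLast (by simp)) := by
      simp [List.getLast_cons]
    rw [hgl]
    have hcount : (((p :: q :: t)).flatMap fun r => [r.1, r.2]).count v
        = (((q :: t)).flatMap fun r => [r.1, r.2]).count v
          + ((if p.1 = v then 1 else 0) + (if p.2 = v then 1 else 0)) := by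
      simp [List.flatMap_cons, List.count_append, List.count_cons, beq_iff_eq]
      omega
    rw [hcount, h1]
    split_ifs at * <;> omega

/-- contribution of value `k` to a tile, as a `Sym2.lift`. -/
def kcount (k : Fin 7) : Tile → ℕ :=
  Sym2.lift ⟨fun a b => (if a = k then 1 else 0) + (if b = k then 1 else 0),
    fun a b => add_comm _ _⟩

theorem blocked_pipsSum_ge (C : DChain) (k : Fin 7) (h : C.Blocked)
    (hl : C.left = k) (hr : C.right = k) :
    6 * (k : ℕ) + 42 ≤ C.pipsSum := by
  classical
  have hmem : ∀ j : Fin 7, Sym2.mk k j ∈ C.tileList := by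
    intro j
    by_contra hj
    have hk := (h _ hj).1
    rw [hl] at hk
    exact hk (by simp)
  -- count of k among entries is at least 8
  have hck : 8 ≤ C.entries.count k := by
    have h1 : C.entries.count k = (C.tileList.map (kcount k)).sum := by
      rw [DChain.entries, count_entries_eq, DChain.tileList, List.map_map]
      congr 1
    have h2 : (C.tileList.map (kcount k)).sum
        = ∑ s ∈ C.tileList.toFinset, kcount k s := by
      exact (List.sum_toFinset _ C.nodup).symm
    have h3 : (Finset.univ.image fun j : Fin 7 => Sym2.mk k j) ⊆ C.tileList.toFinset := by
      intro s hs
      simp only [Finset.mem_image] at hs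
      obtain ⟨j, -, rfl⟩ := hs
      exact List.mem_toFinset.mpr (hmem j)
    have h4 : (∑ s ∈ Finset.univ.image (fun j : Fin 7 => Sym2.mk k j), kcount k s)
        ≤ ∑ s ∈ C.tileList.toFinset, kcount k s :=
      Finset.sum_le_sum_of_subset h3
    have h5 : (∑ s ∈ Finset.univ.image (fun j : Fin 7 => Sym2.mk k j), kcount k s)
        = ∑ j : Fin 7, kcount k (Sym2.mk k j) := by
      rw [Finset.sum_image]
      intro a _ b _ hab
      exact (Sym2.congr_right).mp hab
    have h6 : (∑ j : Fin 7, kcount k (Sym2.mk k j)) = 8 := by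
      have : ∀ j : Fin 7, kcount k (Sym2.mk k j) = 1 + if j = k then 1 else 0 := by
        intro j; simp [kcount]
      simp only [this]
      rw [Finset.sum_add_distrib]
      simp [Finset.sum_ite_eq']
    omega
  -- count of every other value among entries is at least 2
  have hcv : ∀ v : Fin 7, v ≠ k → 2 ≤ C.entries.count v := by
    intro v hv
    have hpos : 1 ≤ C.entries.count v := by
      refine List.count_pos_iff.mpr ?_
      have := hmem v
      rw [DChain.tileList] at this
      obtain ⟨p, hp, hps⟩ := List.mem_map.mp this
      obtain ⟨a, b⟩ := p
      replace hps := (Sym2.mk_eq_mk_iff (p := (a, b)) (q := (k, v))).mp hps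
      refine List.mem_flatMap.mpr ⟨(a, b), hp, ?_⟩
      have hv' : v = a ∨ v = b := by
        rcases hps with h' | h' <;> simp [Prod.ext_iff] at h'
        · exact Or.inr h'.2.symm
        · exact Or.inl h'.1.symm
      rcases hv' with h' | h' <;> simp [h']
    obtain ⟨p, l', ht⟩ := List.exists_cons_of_ne_nil C.ne
    have hlink : (p :: l').Chain' fun p q => p.2 = q.1 := ht ▸ C.linked
    have hpar := parity_aux v p l' hlink
    have hhead : p.1 = k := by
      rw [← hl, DChain.left]
      have : C.tiles.head C.ne = p := by
        apply Option.some_injective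
        rw [← List.head?_eq_head, ht, List.head?_cons]
      rw [this]
    have hlast : ((p :: l').getLast (by simp)).2 = k := by
      rw [← hr, DChain.right]
      congr 1
      apply Option.some_injective
      rw [← List.getLast?_eq_getLast, ← List.getLast?_eq_getLast, ht]
    have hE : C.entries = (p :: l').flatMap fun q => [q.1, q.2] := by
      rw [DChain.entries, ht]
    rw [← hE] at hpar
    rw [hhead, hlast] at hpar
    have hpar' : C.entries.count v % 2 = 0 := by
      simpa [Ne.symm hv] using hpar
    omega
  -- assemble
  have hsum : C.pipsSum = ∑ v : Fin 7, C.entries.count v * (v : ℕ) := by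
    rw [DChain.pipsSum, ← sum_entries_eq, ← sum_map_val, DChain.entries]
  rw [hsum]
  have hbound : (∑ v : Fin 7, (if v = k then 8 else 2) * (v : ℕ))
      ≤ ∑ v : Fin 7, C.entries.count v * (v : ℕ) := by
    refine Finset.sum_le_sum fun v _ => ?_
    by_cases hvk : v = k
    · subst hvk; simp only [if_pos rfl]; exact Nat.mul_le_mul_right _ hck
    · simp only [if_neg hvk]; exact Nat.mul_le_mul_right _ (hcv v hvk)
  refine le_trans (le_of_eq ?_) hbound
  have : (∑ v : Fin 7, (if v = k then 8 else 2) * (v : ℕ))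
      = ∑ v : Fin 7, (2 * (v : ℕ) + if v = k then 6 * (v : ℕ) else 0) := by
    refine Finset.sum_congr rfl fun v _ => ?_
    split_ifs <;> ring
  rw [this, Finset.sum_add_distrib, Finset.sum_ite_eq']
  have h21 : (∑ v : Fin 7, 2 * (v : ℕ)) = 42 := by decide
  simp [h21]
  ring
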